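/- Assume for every agent i that f i (s i) 0 = 0 (remaining at the start state with zero control is a rest point of the dynamics). Let (t_f, d, y, v) be a backward-feasible tuple with t_f = max over i of d i, and suppose it minimizes the makespan among backward-feasible tuples: for every backward-feasible tuple (t'_f, d', y', v'), max_i d i ≤ max_i d' i. Define x i t := y i (t_f − t), and u i t := 0 for t < t_f − d i, u i t := v i (t_f − t) for t ≥ t_f − d i. Then (t_f, x, u) is a forward-feasible tuple, and for every forward-feasible tuple (t'_f, x', u') one has t_f ≤ t'_f; consequently, for every constant c > 0, c · t_f ≤ c · t'_f. (When the objective is c times the common arrival time, the padded reversal of a makespan-optimal backward solution is optimal.) -/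

import Mathlib

/-- A forward-feasible tuple: all agents start at `s`, arrive at `g` at the common time `tf`,
respect free spaces, admissible controls and dynamics, and are pairwise collision-free. -/
def IsForwardFeasible {K : ℕ}
    (E : Fin K → Type*) [∀ i, NormedAddCommGroup (E i)] [∀ i, NormedSpace ℝ (E i)]
    (β : Fin K → Type*) [∀ i, Zero (β i)]
    (R : ∀ i, E i → Set (ℝ × ℝ)) (F : ∀ i, Set (E i)) (U : ∀ i, Set (β i))
    (f : ∀ i, E i → β i → E i) (s g : ∀ i, E i)
    (tf : ℝ) (x : ∀ i, ℝ → E i) (u : ∀ i, ℝ → β i) : Prop :=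
  0 < tf ∧
  (∀ i, x i 0 = s i) ∧
  (∀ i, x i tf = g i) ∧
  (∀ i, ∀ t ∈ Set.Icc (0:ℝ) tf, x i t ∈ F i) ∧
  (∀ i, ∀ t ∈ Set.Icc (0:ℝ) tf, u i t ∈ U i) ∧
  (∀ i, ∀ t ∈ Set.Ioo (0:ℝ) tf, HasDerivAt (x i) (f i (x i t) (u i t)) t) ∧
  (∀ t ∈ Set.Icc (0:ℝ) tf, ∀ i j, i ≠ j → R i (x i t) ∩ R j (x j t) = ∅)

/-- A backward-feasible tuple: all agents start at `g`, reach `s` at their individual duration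
`d i` and park there with zero control, respect free spaces, admissible controls and the
time-reversed dynamics, and are pairwise collision-free. -/
def IsBackwardFeasible {K : ℕ}
    (E : Fin K → Type*) [∀ i, NormedAddCommGroup (E i)] [∀ i, NormedSpace ℝ (E i)]
    (β : Fin K → Type*) [∀ i, Zero (β i)]
    (R : ∀ i, E i → Set (ℝ × ℝ)) (F : ∀ i, Set (E i)) (U : ∀ i, Set (β i))
    (f : ∀ i, E i → β i → E i) (s g : ∀ i, E i)
    (tf : ℝ) (d : Fin K → ℝ) (y : ∀ i, ℝ → E i) (v : ∀ i, ℝ → β i) : Prop :=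
  0 < tf ∧
  (∀ i, d i ∈ Set.Ioc (0:ℝ) tf) ∧
  (∀ i, y i 0 = g i) ∧
  (∀ i, ∀ t ∈ Set.Icc (d i) tf, y i t = s i) ∧
  (∀ i, ∀ t ∈ Set.Ioo (d i) tf, v i t = 0) ∧
  (∀ i, ∀ t ∈ Set.Icc (0:ℝ) tf, y i t ∈ F i) ∧
  (∀ i, ∀ t ∈ Set.Icc (0:ℝ) tf, v i t ∈ U i) ∧
  (∀ i, ∀ t ∈ Set.Ioo (0:ℝ) tf, HasDerivAt (y i) (-f i (y i t) (v i t)) t) ∧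
  (∀ t ∈ Set.Icc (0:ℝ) tf, ∀ i j, i ≠ j → R i (y i t) ∩ R j (y j t) = ∅)

/-- The padded reversal of a makespan-optimal backward solution is forward feasible and
minimizes the common arrival time; hence it minimizes `c · t_f` for every `c > 0`. -/
theorem padded_reversal_of_makespan_optimal_backward
    {K : ℕ} (hK : 1 ≤ K)
    (E : Fin K → Type*) [∀ i, NormedAddCommGroup (E i)] [∀ i, NormedSpace ℝ (E i)]
    (β : Fin K → Type*) [∀ i, Zero (β i)]
    (R : ∀ i, E i → Set (ℝ × ℝ)) (F : ∀ i, Set (E i)) (U : ∀ i, Set (β i))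
    (hU : ∀ i, (0 : β i) ∈ U i)
    (f : ∀ i, E i → β i → E i) (s g : ∀ i, E i)
    (hrest : ∀ i, f i (s i) 0 = 0)
    (tf : ℝ) (d : Fin K → ℝ) (y : ∀ i, ℝ → E i) (v : ∀ i, ℝ → β i)
    (hback : IsBackwardFeasible E β R F U f s g tf d y v)
    (htf : tf = Finset.univ.sup' (Finset.univ_nonempty_iff.mpr ⟨⟨0, hK⟩⟩) d)
    (hopt : ∀ (tf' : ℝ) (d' : Fin K → ℝ) (y' : ∀ i, ℝ → E i) (v' : ∀ i, ℝ → β i),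
      IsBackwardFeasible E β R F U f s g tf' d' y' v' →
      Finset.univ.sup' (Finset.univ_nonempty_iff.mpr ⟨⟨0, hK⟩⟩) d ≤
        Finset.univ.sup' (Finset.univ_nonempty_iff.mpr ⟨⟨0, hK⟩⟩) d') :
    IsForwardFeasible E β R F U f s g tf
        (fun i t => y i (tf - t))
        (fun i t => if t < tf - d i then (0 : β i) else v i (tf - t)) ∧
    (∀ (tf' : ℝ) (x' : ∀ i, ℝ → E i) (u' : ∀ i, ℝ → β i),
      IsForwardFeasible E β R F U f s g tf' x' u' →
      tf ≤ tf' ∧ ∀ c : ℝ, 0 < c → c * tf ≤ c * tf') := by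

  obtain ⟨htf0, hd, hy0, hys, hv0, hF, hU', hderiv, hcol⟩ := hback
  constructor
  · refine ⟨htf0, ?_, ?_, ?_, ?_, ?_, ?_⟩
    · intro i; simpa using hys i tf ⟨(hd i).2, le_rfl⟩
    · intro i; simpa using hy0 i
    · intro i t ht
      exact hF i (tf - t) ⟨by linarith [ht.2], by linarith [ht.1]⟩
    · intro i t ht
      by_cases h : t < tf - d i
      · simpa [h] using hU i
      · simp only [h, if_neg, if_false]
        exact hU' i (tf - t) ⟨by linarith [ht.2], by linarith [ht.1]⟩
    · intro i t ht
      have hmem : tf - t ∈ Set.Ioo (0:ℝ) tf := ⟨by linarith [ht.2], by linarith [ht.1]⟩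
      have hd' := hderiv i (tf - t) hmem
      have hcomp := hd'.scomp t (((hasDerivAt_id t).const_sub tf))
      have hval : (if t < tf - d i then (0 : β i) else v i (tf - t)) = v i (tf - t) := by
        by_cases h : t < tf - d i
        · simp [h, (hv0 i (tf - t) ⟨by linarith, by linarith [ht.1]⟩).symm]
        · simp [h]
      show HasDerivAt (fun t => y i (tf - t))
        (f i (y i (tf - t)) (if t < tf - d i then (0 : β i) else v i (tf - t))) t
      rw [hval]
      simpa [Function.comp_def] using hcomp
    · intro t ht i j hij
      exact hcol (tf - t) ⟨by linarith [ht.2], by linarith [ht.1]⟩ i j hij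
  · intro tf' x' u' hfwd
    obtain ⟨htf0', hx0, hxg, hF', hU'', hderiv', hcol'⟩ := hfwd
    have hback' : IsBackwardFeasible E β R F U f s g tf' (fun _ => tf')
        (fun i t => x' i (tf' - t)) (fun i t => u' i (tf' - t)) := by
      refine ⟨htf0', fun i => ⟨htf0', le_rfl⟩, ?_, ?_, ?_, ?_, ?_, ?_, ?_⟩
      · intro i; simpa using hxg i
      · intro i t ht
        have : t = tf' := le_antisymm ht.2 ht.1
        simpa [this] using hx0 i
      · intro i t ht; exact absurd ht.2 (not_lt.mpr ht.1.le)
      · intro i t ht; exact hF' i (tf' - t) ⟨by linarith [ht.2], by linarith [ht.1]⟩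
      · intro i t ht; exact hU'' i (tf' - t) ⟨by linarith [ht.2], by linarith [ht.1]⟩
      · intro i t ht
        have hmem : tf' - t ∈ Set.Ioo (0:ℝ) tf' := ⟨by linarith [ht.2], by linarith [ht.1]⟩
        have hcomp := (hderiv' i (tf' - t) hmem).scomp t ((hasDerivAt_id t).const_sub tf')
        simpa [Function.comp_def] using hcomp
      · intro t ht i j hij
        exact hcol' (tf' - t) ⟨by linarith [ht.2], by linarith [ht.1]⟩ i j hij
    have hle := hopt tf' (fun _ => tf') _ _ hback'
    rw [Finset.sup'_const] at hle
    have h1 : tf ≤ tf' := htf ▸ hle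
    exact ⟨h1, fun c hc => mul_le_mul_of_nonneg_left h1 hc.le⟩
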